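/- Let J be a B(H)-ideal, φ : H → H ⊕ H a unitary operator, D ∈ B(H), and S := φ⁻¹ ∘ (D ⊕ 0) ∘ φ, where D ⊕ 0 is the operator on H ⊕ H acting as D on the first summand and 0 on the second. Assume S ∈ J. If U S U* ∈ (S)_J for every unitary U ∈ B(H), then (S)_J is a two-sided ideal of B(H). -/

import Mathlib

open Pointwise

variable {H : Type*} [NormedAddCommGroup H] [InnerProductSpace ℂ H] [CompleteSpace H]
  [TopologicalSpace.SeparableSpace H]

/-- A `B(H)`-ideal: a two-sided ideal of the algebra `B(H)` of bounded operators on `H`. -/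
def IsBHIdeal (J : Set (H →L[ℂ] H)) : Prop :=
  0 ∈ J ∧ (∀ x ∈ J, ∀ y ∈ J, x + y ∈ J) ∧
    (∀ (A : H →L[ℂ] H), ∀ x ∈ J, A * x ∈ J) ∧
    (∀ (A : H →L[ℂ] H), ∀ x ∈ J, x * A ∈ J)

/-- `I` is a `J`-ideal (a subideal): a `ℂ`-linear subspace of `B(H)` contained in `J` that is
closed under left and right multiplication by elements of `J`. -/
def IsSubideal (J I : Set (H →L[ℂ] H)) : Prop :=
  I ⊆ J ∧ 0 ∈ I ∧ (∀ x ∈ I, ∀ y ∈ I, x + y ∈ I) ∧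
    (∀ (c : ℂ), ∀ x ∈ I, c • x ∈ I) ∧
    (∀ A ∈ J, ∀ x ∈ I, A * x ∈ I ∧ x * A ∈ I)

/-- `(𝒮)_J`, the smallest `J`-ideal containing the set `𝒮`. -/
def subidealGen (J 𝒮 : Set (H →L[ℂ] H)) : Set (H →L[ℂ] H) :=
  ⋂₀ {I | IsSubideal J I ∧ 𝒮 ⊆ I}

/-- `(𝒮)`, the smallest `B(H)`-ideal containing the set `𝒮`. -/
def idealGen (𝒮 : Set (H →L[ℂ] H)) : Set (H →L[ℂ] H) :=
  ⋂₀ {I | IsBHIdeal I ∧ 𝒮 ⊆ I}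

/-- The product `IJ` of two ideals: the set of finite sums `Σ Xᵢ Yᵢ` with `Xᵢ ∈ I`, `Yᵢ ∈ J`. -/
def idealProd (I J : Set (H →L[ℂ] H)) : Set (H →L[ℂ] H) :=
  {T | ∃ (n : ℕ) (X Y : Fin n → (H →L[ℂ] H)),
    (∀ i, X i ∈ I) ∧ (∀ i, Y i ∈ J) ∧ T = ∑ i, X i * Y i}

/-- `J(𝒮)J`: the set of finite sums `Σ Aᵢ Xᵢ Bᵢ` with `Aᵢ, Bᵢ ∈ J` and `Xᵢ ∈ (𝒮)`. -/
def JSJ (J 𝒮 : Set (H →L[ℂ] H)) : Set (H →L[ℂ] H) :=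
  {T | ∃ (n : ℕ) (A X B : Fin n → (H →L[ℂ] H)),
    (∀ i, A i ∈ J) ∧ (∀ i, B i ∈ J) ∧ (∀ i, X i ∈ idealGen 𝒮) ∧
    T = ∑ i, A i * X i * B i}

/-- `U_J(H)`: the unitaries of the form `1 + A` with `A ∈ J`. -/
def unitaryJ (J : Set (H →L[ℂ] H)) : Set (H →L[ℂ] H) :=
  {U | U ∈ unitary (H →L[ℂ] H) ∧ U - 1 ∈ J}

/-- The operator `A ⊕ B` on the Hilbert space direct sum `H ⊕ H`. -/
noncomputable def oplus (A B : H →L[ℂ] H) : WithLp 2 (H × H) →L[ℂ] WithLp 2 (H × H) :=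
  (((WithLp.prodContinuousLinearEquiv 2 ℂ H H).symm : (H × H) →L[ℂ] WithLp 2 (H × H))).comp
    ((A.prodMap B).comp
      ((WithLp.prodContinuousLinearEquiv 2 ℂ H H : WithLp 2 (H × H) ≃L[ℂ] H × H) :
        WithLp 2 (H × H) →L[ℂ] (H × H)))

/-- `φ⁻¹ ∘ T ∘ φ` for a unitary `φ : H → H ⊕ H` and `T` an operator on `H ⊕ H`. -/
noncomputable def conjOp (φ : H ≃ₗᵢ[ℂ] WithLp 2 (H × H))
    (T : WithLp 2 (H × H) →L[ℂ] WithLp 2 (H × H)) : H →L[ℂ] H :=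
  ((φ.symm.toContinuousLinearEquiv : WithLp 2 (H × H) ≃L[ℂ] H) :
      WithLp 2 (H × H) →L[ℂ] H).comp
    (T.comp ((φ.toContinuousLinearEquiv : H ≃L[ℂ] WithLp 2 (H × H)) : H →L[ℂ] WithLp 2 (H × H)))

namespace UnitaryInvarianceAux

/-- The coordinate-swap operator on `H ⊕ H`. -/
noncomputable def swapOp : WithLp 2 (H × H) →L[ℂ] WithLp 2 (H × H) :=
  (((WithLp.prodContinuousLinearEquiv 2 ℂ H H).symm : (H × H) →L[ℂ] WithLp 2 (H × H))).comp
    (((ContinuousLinearMap.snd ℂ H H).prod (ContinuousLinearMap.fst ℂ H H)).comp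
      ((WithLp.prodContinuousLinearEquiv 2 ℂ H H : WithLp 2 (H × H) ≃L[ℂ] H × H) :
        WithLp 2 (H × H) →L[ℂ] (H × H)))

lemma oplus_mul (A B C D : H →L[ℂ] H) :
    oplus A B * oplus C D = oplus (A * C) (B * D) := by
  ext x
  rfl

lemma swap_oplus_swap (A B : H →L[ℂ] H) :
    swapOp * oplus A B * swapOp = oplus B A := by
  ext x
  rfl

lemma swap_sq : (swapOp : WithLp 2 (H × H) →L[ℂ] _) * swapOp = 1 := by
  ext x
  rfl

lemma oplus_zero_zero : oplus (0 : H →L[ℂ] H) 0 = 0 := by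
  ext x
  rfl

lemma conjOp_mul (φ : H ≃ₗᵢ[ℂ] WithLp 2 (H × H))
    (T₁ T₂ : WithLp 2 (H × H) →L[ℂ] WithLp 2 (H × H)) :
    conjOp φ T₁ * conjOp φ T₂ = conjOp φ (T₁ * T₂) := by
  ext x
  show φ.symm (T₁ (φ (φ.symm (T₂ (φ x))))) = φ.symm (T₁ (T₂ (φ x)))
  rw [φ.apply_symm_apply]

lemma conjOp_one (φ : H ≃ₗᵢ[ℂ] WithLp 2 (H × H)) : conjOp φ 1 = 1 := by
  ext x
  show φ.symm (φ x) = x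
  rw [φ.symm_apply_apply]

lemma conjOp_zero (φ : H ≃ₗᵢ[ℂ] WithLp 2 (H × H)) : conjOp φ 0 = 0 := by
  ext x
  show φ.symm 0 = 0
  simp

open scoped InnerProductSpace in
lemma star_conj_swap (φ : H ≃ₗᵢ[ℂ] WithLp 2 (H × H)) :
    star (conjOp φ swapOp) = conjOp φ swapOp := by
  rw [ContinuousLinearMap.star_eq_adjoint]
  symm
  rw [ContinuousLinearMap.eq_adjoint_iff]
  intro x y
  show ⟪φ.symm (swapOp (φ x)), y⟫_ℂ = ⟪x, φ.symm (swapOp (φ y))⟫_ℂ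
  rw [← φ.inner_map_map (φ.symm (swapOp (φ x))) y, φ.apply_symm_apply,
    ← φ.inner_map_map x (φ.symm (swapOp (φ y))), φ.apply_symm_apply]
  show ⟪(φ x).snd, (φ y).fst⟫_ℂ + ⟪(φ x).fst, (φ y).snd⟫_ℂ
      = ⟪(φ x).fst, (φ y).snd⟫_ℂ + ⟪(φ x).snd, (φ y).fst⟫_ℂ
  exact add_comm _ _

end UnitaryInvarianceAux

open UnitaryInvarianceAux in
/-- if `S = φ⁻¹ (D ⊕ 0) φ ∈ J` and `(S)_J` is invariant under all unitary
conjugations, then `(S)_J` is a `B(H)`-ideal. -/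
theorem unitary_invariance_implies_BHIdeal (J : Set (H →L[ℂ] H)) (hJ : IsBHIdeal J)
    (hinf : ¬FiniteDimensional ℂ H) (φ : H ≃ₗᵢ[ℂ] WithLp 2 (H × H))
    (D S : H →L[ℂ] H) (hSdef : S = conjOp φ (oplus D 0)) (hS : S ∈ J)
    (hinv : ∀ U ∈ unitary (H →L[ℂ] H), U * S * star U ∈ subidealGen J {S}) :
    IsBHIdeal (subidealGen J {S}) := by
  classical
  -- J is closed under scalar multiplication
  have hJsmul : ∀ (c : ℂ), ∀ x ∈ J, c • x ∈ J := by
    intro c x hx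
    have := hJ.2.2.1 (c • 1) x hx
    rwa [smul_mul_assoc, one_mul] at this
  have hJsub : IsSubideal J J :=
    ⟨subset_rfl, hJ.1, hJ.2.1, hJsmul, fun A hA x hx => ⟨hJ.2.2.1 A x hx, hJ.2.2.2 A x hx⟩⟩
  set gen := subidealGen J {S} with hgen
  have hJmem : J ∈ {I | IsSubideal J I ∧ {S} ⊆ I} :=
    ⟨hJsub, Set.singleton_subset_iff.mpr hS⟩
  have hSgen : S ∈ gen := Set.mem_sInter.mpr fun I hI => hI.2 rfl
  have hgenSub : IsSubideal J gen := by
    refine ⟨?_, ?_, ?_, ?_, ?_⟩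
    · intro x hx
      exact Set.mem_sInter.mp hx J hJmem
    · exact Set.mem_sInter.mpr fun I hI => hI.1.2.1
    · intro x hx y hy
      exact Set.mem_sInter.mpr fun I hI =>
        hI.1.2.2.1 x (Set.mem_sInter.mp hx I hI) y (Set.mem_sInter.mp hy I hI)
    · intro c x hx
      exact Set.mem_sInter.mpr fun I hI => hI.1.2.2.2.1 c x (Set.mem_sInter.mp hx I hI)
    · intro A hA x hx
      constructor
      · exact Set.mem_sInter.mpr fun I hI =>
          (hI.1.2.2.2.2 A hA x (Set.mem_sInter.mp hx I hI)).1
      · exact Set.mem_sInter.mpr fun I hI =>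
          (hI.1.2.2.2.2 A hA x (Set.mem_sInter.mp hx I hI)).2
  have gen_min : ∀ I : Set (H →L[ℂ] H), IsSubideal J I → S ∈ I → gen ⊆ I := by
    intro I hI hSI x hx
    exact Set.mem_sInter.mp hx I ⟨hI, Set.singleton_subset_iff.mpr hSI⟩
  -- the special operators
  set W : H →L[ℂ] H := conjOp φ swapOp with hW
  set Q : H →L[ℂ] H := conjOp φ (oplus 0 1) with hQ
  set S₂ : H →L[ℂ] H := conjOp φ (oplus 0 D) with hS₂
  have hstarW : star W = W := star_conj_swap φ
  have hWW : W * W = 1 := by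
    rw [hW, conjOp_mul, swap_sq, conjOp_one]
  have hWunit : W ∈ unitary (H →L[ℂ] H) := by
    rw [Unitary.mem_iff, hstarW]
    exact ⟨hWW, hWW⟩
  have hQS : Q * S = 0 := by
    rw [hQ, hSdef, conjOp_mul, oplus_mul, zero_mul, one_mul, oplus_zero_zero, conjOp_zero]
  have hSQ : S * Q = 0 := by
    rw [hQ, hSdef, conjOp_mul, oplus_mul, mul_zero, zero_mul, oplus_zero_zero, conjOp_zero]
  have hWSW : W * S * W = S₂ := by
    rw [hW, hSdef, hS₂, conjOp_mul, conjOp_mul, swap_oplus_swap]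
  have hQS₂Q : Q * S₂ * Q = S₂ := by
    rw [hQ, hS₂, conjOp_mul, conjOp_mul, oplus_mul, oplus_mul]
    congr 1 <;> simp
  -- the span of J S J
  set Tgens : Set (H →L[ℂ] H) := {x | ∃ j ∈ J, ∃ k ∈ J, x = j * S * k} with hTgens
  set Tmod : Submodule ℂ (H →L[ℂ] H) := Submodule.span ℂ Tgens with hTmod
  have hTsubJ : (Tmod : Set (H →L[ℂ] H)) ⊆ J := by
    intro x hx
    induction hx using Submodule.span_induction with
    | mem x hx =>
      obtain ⟨j, hj, k, hk, rfl⟩ := hx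
      exact hJ.2.2.2 k _ (hJ.2.2.1 j S hS)
    | zero => exact hJ.1
    | add x y hx hy ihx ihy => exact hJ.2.1 x ihx y ihy
    | smul c x hx ih => exact hJsmul c x ih
  have hTmul : ∀ A : H →L[ℂ] H, ∀ x ∈ Tmod, A * x ∈ Tmod ∧ x * A ∈ Tmod := by
    intro A x hx
    induction hx using Submodule.span_induction with
    | mem x hx =>
      obtain ⟨j, hj, k, hk, rfl⟩ := hx
      constructor
      · refine Submodule.subset_span ⟨A * j, hJ.2.2.1 A j hj, k, hk, ?_⟩
        noncomm_ring
      · refine Submodule.subset_span ⟨j, hj, k * A, hJ.2.2.2 A k hk, ?_⟩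
        noncomm_ring
    | zero => constructor <;> simp
    | add x y hx hy ihx ihy =>
      constructor
      · rw [mul_add]; exact Tmod.add_mem ihx.1 ihy.1
      · rw [add_mul]; exact Tmod.add_mem ihx.2 ihy.2
    | smul c x hx ih =>
      constructor
      · rw [mul_smul_comm]; exact Tmod.smul_mem c ih.1
      · rw [smul_mul_assoc]; exact Tmod.smul_mem c ih.2
  have hTgen : (Tmod : Set (H →L[ℂ] H)) ⊆ gen := by
    intro x hx
    induction hx using Submodule.span_induction with
    | mem x hx =>
      obtain ⟨j, hj, k, hk, rfl⟩ := hx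
      exact (hgenSub.2.2.2.2 k hk _ ((hgenSub.2.2.2.2 j hj S hSgen).1)).2
    | zero => exact hgenSub.2.1
    | add x y hx hy ihx ihy => exact hgenSub.2.2.1 x ihx y ihy
    | smul c x hx ih => exact hgenSub.2.2.2.1 c x ih
  -- the explicit description of gen from above: gen ⊆ span (S, JS, SJ, JSJ)
  set Egens : Set (H →L[ℂ] H) :=
    {S} ∪ ({x | ∃ j ∈ J, x = j * S} ∪ ({x | ∃ j ∈ J, x = S * j} ∪ Tgens)) with hEgens
  set Emod : Submodule ℂ (H →L[ℂ] H) := Submodule.span ℂ Egens with hEmod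
  have hEgens_subJ : Egens ⊆ J := by
    rintro x (rfl | ⟨j, hj, rfl⟩ | ⟨j, hj, rfl⟩ | ⟨j, hj, k, hk, rfl⟩)
    · exact hS
    · exact hJ.2.2.1 j S hS
    · exact hJ.2.2.2 j S hS
    · exact hJ.2.2.2 k _ (hJ.2.2.1 j S hS)
  have hEsubJ : (Emod : Set (H →L[ℂ] H)) ⊆ J := by
    intro x hx
    induction hx using Submodule.span_induction with
    | mem x hx => exact hEgens_subJ hx
    | zero => exact hJ.1
    | add x y hx hy ihx ihy => exact hJ.2.1 x ihx y ihy
    | smul c x hx ih => exact hJsmul c x ih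
  have hEmul : ∀ A ∈ J, ∀ x ∈ Emod, A * x ∈ Emod ∧ x * A ∈ Emod := by
    intro A hA x hx
    induction hx using Submodule.span_induction with
    | mem x hx =>
      rcases hx with rfl | ⟨j, hj, rfl⟩ | ⟨j, hj, rfl⟩ | ⟨j, hj, k, hk, rfl⟩
      · constructor
        · exact Submodule.subset_span (Or.inr (Or.inl ⟨A, hA, rfl⟩))
        · exact Submodule.subset_span (Or.inr (Or.inr (Or.inl ⟨A, hA, rfl⟩)))
      · constructor
        · refine Submodule.subset_span (Or.inr (Or.inl ⟨A * j, hJ.2.2.1 A j hj, ?_⟩))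
          noncomm_ring
        · refine Submodule.subset_span (Or.inr (Or.inr (Or.inr ⟨j, hj, A, hA, rfl⟩)))
      · constructor
        · refine Submodule.subset_span (Or.inr (Or.inr (Or.inr ⟨A, hA, j, hj, ?_⟩)))
          noncomm_ring
        · refine Submodule.subset_span (Or.inr (Or.inr (Or.inl ⟨j * A, hJ.2.2.2 A j hj, ?_⟩)))
          noncomm_ring
      · constructor
        · refine Submodule.subset_span (Or.inr (Or.inr (Or.inr
            ⟨A * j, hJ.2.2.1 A j hj, k, hk, ?_⟩)))
          noncomm_ring
        · refine Submodule.subset_span (Or.inr (Or.inr (Or.inr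
            ⟨j, hj, k * A, hJ.2.2.2 A k hk, ?_⟩)))
          noncomm_ring
    | zero =>
      constructor <;> simp
    | add x y hx hy ihx ihy =>
      constructor
      · rw [mul_add]; exact Emod.add_mem ihx.1 ihy.1
      · rw [add_mul]; exact Emod.add_mem ihx.2 ihy.2
    | smul c x hx ih =>
      constructor
      · rw [mul_smul_comm]; exact Emod.smul_mem c ih.1
      · rw [smul_mul_assoc]; exact Emod.smul_mem c ih.2
  have hEsub : IsSubideal J (Emod : Set (H →L[ℂ] H)) :=
    ⟨hEsubJ, Emod.zero_mem, fun x hx y hy => Emod.add_mem hx hy,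
      fun c x hx => Emod.smul_mem c hx, hEmul⟩
  have hgenE : gen ⊆ (Emod : Set (H →L[ℂ] H)) :=
    gen_min _ hEsub (Submodule.subset_span (Or.inl rfl))
  -- compression by Q sends Emod into Tmod
  have hQEQ : ∀ x ∈ Emod, Q * x * Q ∈ Tmod := by
    intro x hx
    induction hx using Submodule.span_induction with
    | mem x hx =>
      rcases hx with rfl | ⟨j, hj, rfl⟩ | ⟨j, hj, rfl⟩ | ⟨j, hj, k, hk, rfl⟩
      · rw [hQS, zero_mul]; exact Tmod.zero_mem
      · have h : Q * (j * S) * Q = (Q * j) * (S * Q) := by noncomm_ring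
        rw [h, hSQ, mul_zero]; exact Tmod.zero_mem
      · have h : Q * (S * j) * Q = (Q * S) * (j * Q) := by noncomm_ring
        rw [h, hQS, zero_mul]; exact Tmod.zero_mem
      · refine Submodule.subset_span ⟨Q * j, hJ.2.2.1 Q j hj, k * Q, hJ.2.2.2 Q k hk, ?_⟩
        noncomm_ring
    | zero =>
      rw [mul_zero, zero_mul]; exact Tmod.zero_mem
    | add x y hx hy ihx ihy =>
      have : Q * (x + y) * Q = Q * x * Q + Q * y * Q := by
        rw [mul_add, add_mul]
      rw [this]; exact Tmod.add_mem ihx ihy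
    | smul c x hx ih =>
      have : Q * (c • x) * Q = c • (Q * x * Q) := by
        rw [mul_smul_comm, smul_mul_assoc]
      rw [this]; exact Tmod.smul_mem c ih
  -- Key step: S itself lies in Tmod
  have hS₂gen : S₂ ∈ gen := by
    have := hinv W hWunit
    rwa [hstarW, hWSW] at this
  have hS₂T : S₂ ∈ Tmod := by
    have h1 : Q * S₂ * Q ∈ Tmod := hQEQ S₂ (hgenE hS₂gen)
    rwa [hQS₂Q] at h1
  have hST : S ∈ Tmod := by
    have h1 : W * S₂ ∈ Tmod := (hTmul W S₂ hS₂T).1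
    have h2 : (W * S₂) * W ∈ Tmod := (hTmul W _ h1).2
    have h3 : W * S₂ * W = S := by
      rw [← hWSW]
      have h4 : W * (W * S * W) * W = (W * W) * S * (W * W) := by noncomm_ring
      rw [h4, hWW, one_mul, mul_one]
    rwa [h3] at h2
  -- conclude
  refine ⟨hgenSub.2.1, fun x hx y hy => hgenSub.2.2.1 x hx y hy, ?_, ?_⟩
  · intro A x hx
    have hxT : x ∈ Tmod := by
      -- gen ⊆ Tmod since Tmod is a subideal containing S
      have hTsub : IsSubideal J (Tmod : Set (H →L[ℂ] H)) :=
        ⟨hTsubJ, Tmod.zero_mem, fun a ha b hb => Tmod.add_mem ha hb,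
          fun c a ha => Tmod.smul_mem c ha, fun A' hA' a ha => hTmul A' a ha⟩
      exact gen_min _ hTsub hST hx
    exact hTgen (hTmul A x hxT).1
  · intro A x hx
    have hxT : x ∈ Tmod := by
      have hTsub : IsSubideal J (Tmod : Set (H →L[ℂ] H)) :=
        ⟨hTsubJ, Tmod.zero_mem, fun a ha b hb => Tmod.add_mem ha hb,
          fun c a ha => Tmod.smul_mem c ha, fun A' hA' a ha => hTmul A' a ha⟩
      exact gen_min _ hTsub hST hx
    exact hTgen (hTmul A x hxT).2
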